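/- Set J₀ := {0} × J, an ideal of A⋈^f J. The map sending a prime ideal Q of B to Q̄^f := {(a, f(a)+j) : a ∈ A, j ∈ J, f(a)+j ∈ Q} is a homeomorphism from the subspace Spec(B) \ V(J) of Spec(B) (prime ideals of B not containing J) onto the subspace Spec(A⋈^f J) \ V(J₀) (prime ideals of A⋈^f J not containing J₀), where both subspaces carry the Zariski topology. -/

import Mathlib

section Amalgamation

variable {A B : Type*} [CommRing A] [CommRing B]

/-- The amalgamation `A ⋈^f J` of `A` with `B` along the ideal `J` of `B` with respect to
the ring homomorphism `f : A → B`, realized as the subring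
`{(a, f a + j) | a ∈ A, j ∈ J}` of `A × B`. -/
def amalg (f : A →+* B) (J : Ideal B) : Subring (A × B) where
  carrier := {x : A × B | x.2 - f x.1 ∈ J}
  zero_mem' := by simp
  one_mem' := by simp
  add_mem' := by
    intro x y hx hy
    simp only [Set.mem_setOf_eq, Prod.fst_add, Prod.snd_add, map_add] at *
    have h : x.2 + y.2 - (f x.1 + f y.1) = x.2 - f x.1 + (y.2 - f y.1) := by ring
    rw [h]; exact J.add_mem hx hy
  neg_mem' := by
    intro x hx
    simp only [Set.mem_setOf_eq, Prod.fst_neg, Prod.snd_neg, map_neg] at *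
    have h : -x.2 - -f x.1 = -(x.2 - f x.1) := by ring
    rw [h]; exact J.neg_mem hx
  mul_mem' := by
    intro x y hx hy
    simp only [Set.mem_setOf_eq, Prod.fst_mul, Prod.snd_mul, map_mul] at *
    have h : x.2 * y.2 - f x.1 * f y.1 = x.2 * (y.2 - f y.1) + (x.2 - f x.1) * f y.1 := by ring
    rw [h]
    exact J.add_mem (J.mul_mem_left _ hy) (J.mul_mem_right _ hx)

lemma mem_amalg_iff (f : A →+* B) (J : Ideal B) (x : A × B) :
    x ∈ amalg f J ↔ x.2 - f x.1 ∈ J := Iff.rfl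

/-- The natural projection `p_A : A ⋈^f J → A`. -/
def pA (f : A →+* B) (J : Ideal B) : amalg f J →+* A :=
  (RingHom.fst A B).comp (amalg f J).subtype

/-- The natural projection `p_B : A ⋈^f J → B`. -/
def pB (f : A →+* B) (J : Ideal B) : amalg f J →+* B :=
  (RingHom.snd A B).comp (amalg f J).subtype

/-- For an ideal `Q` of `B`, the ideal `Q̄^f = {(a, f a + j) | a ∈ A, j ∈ J, f a + j ∈ Q}`
of `A ⋈^f J`. -/
def idealQf (f : A →+* B) (J : Ideal B) (Q : Ideal B) : Ideal (amalg f J) :=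
  Submodule.copy (Ideal.comap (pB f J) Q)
    {x : amalg f J | ∃ a : A, ∃ j ∈ J, (x : A × B) = (a, f a + j) ∧ f a + j ∈ Q}
    (by
      ext x
      simp only [Set.mem_setOf_eq, SetLike.mem_coe, Ideal.mem_comap]
      constructor
      · rintro ⟨a, j, hj, hx, hQ⟩
        have h1 : pB f J x = f a + j := by
          show (x : A × B).2 = f a + j
          rw [hx]
        rw [h1]; exact hQ
      · intro hx
        refine ⟨(x : A × B).1, (x : A × B).2 - f (x : A × B).1,
          (mem_amalg_iff f J _).mp x.2, by ext <;> simp, ?_⟩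
        have hx' : (x : A × B).2 ∈ Q := hx
        simpa using hx')

/-- The ideal `J₀ = {0} × J` of `A ⋈^f J`. -/
def J0 (f : A →+* B) (J : Ideal B) : Ideal (amalg f J) :=
  Submodule.copy (RingHom.ker (pA f J))
    {x : amalg f J | (x : A × B).1 = 0 ∧ (x : A × B).2 ∈ J}
    (by
      ext x
      simp only [Set.mem_setOf_eq, SetLike.mem_coe, RingHom.mem_ker]
      constructor
      · rintro ⟨h0, _⟩; exact h0
      · intro h0
        have h0' : (x : A × B).1 = 0 := h0
        refine ⟨h0', ?_⟩
        have h2 := (mem_amalg_iff f J _).mp x.2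
        rw [h0', map_zero, sub_zero] at h2
        exact h2)

end Amalgamation

section Aux

variable {A B : Type*} [CommRing A] [CommRing B] (f : A →+* B) (J : Ideal B)

/-- The element `(0, j)` of the amalgamation. -/
def el (j : B) (hj : j ∈ J) : amalg f J :=
  ⟨(0, j), by simp [mem_amalg_iff, hj]⟩

lemma el_congr {j j' : B} (hj : j ∈ J) (hj' : j' ∈ J) (h : j = j') :
    el f J j hj = el f J j' hj' := by subst h; rfl

lemma el_mul (j : B) (hj : j ∈ J) (x : amalg f J) :
    el f J j hj * x = el f J (j * (x : A × B).2) (J.mul_mem_right _ hj) := by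
  apply Subtype.ext
  show ((0, j) : A × B) * (x : A × B) = (0, j * (x : A × B).2)
  ext <;> simp

lemma el_mem_J0 (j : B) (hj : j ∈ J) : el f J j hj ∈ J0 f J := by
  show ((el f J j hj : A × B).1 = 0 ∧ (el f J j hj : A × B).2 ∈ J)
  exact ⟨rfl, hj⟩

lemma pB_el (j : B) (hj : j ∈ J) : pB f J (el f J j hj) = j := rfl

lemma idealQf_eq (Q : Ideal B) : idealQf f J Q = Ideal.comap (pB f J) Q :=
  Submodule.copy_eq _ _ _

/-- The candidate inverse ideal. -/
def invIdeal (q : Ideal (amalg f J)) : Ideal B where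
  carrier := {b | ∀ j, ∀ hj : j ∈ J, el f J (j * b) (J.mul_mem_right b hj) ∈ q}
  zero_mem' := by
    intro j hj
    rw [el_congr f J _ J.zero_mem (mul_zero j)]
    have h : el f J 0 J.zero_mem = 0 := Subtype.ext (by simp [el])
    rw [h]; exact q.zero_mem
  add_mem' := by
    intro b b' hb hb' j hj
    have h : el f J (j * (b + b')) (J.mul_mem_right _ hj)
        = el f J (j * b) (J.mul_mem_right _ hj) + el f J (j * b') (J.mul_mem_right _ hj) :=
      Subtype.ext (by simp [el, mul_add])
    rw [h]; exact q.add_mem (hb j hj) (hb' j hj)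
  smul_mem' := by
    intro c b hb j hj
    rw [el_congr f J _ (J.mul_mem_right b (J.mul_mem_right c hj))
      (by show j * (c * b) = (j * c) * b; ring)]
    exact hb (j * c) (J.mul_mem_right c hj)

lemma mem_invIdeal (q : Ideal (amalg f J)) (b : B) :
    b ∈ invIdeal f J q ↔ ∀ j, ∀ hj : j ∈ J, el f J (j * b) (J.mul_mem_right b hj) ∈ q :=
  Iff.rfl

variable {f J}

lemma mem_invIdeal_iff {q : Ideal (amalg f J)} (hq : q.IsPrime)
    {j0 : B} (h0 : j0 ∈ J) (hj0 : el f J j0 h0 ∉ q) (b : B) :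
    b ∈ invIdeal f J q ↔ el f J (j0 * b) (J.mul_mem_right b h0) ∈ q := by
  constructor
  · exact fun h => h j0 h0
  · intro h j hj
    have h1 : el f J j hj * el f J (j0 * b) (J.mul_mem_right b h0)
        = el f J j0 h0 * el f J (j * b) (J.mul_mem_right b hj) := by
      rw [el_mul, el_mul]
      exact el_congr f J _ _ (by show j * (j0 * b) = j0 * (j * b); ring)
    have h2 : el f J j0 h0 * el f J (j * b) (J.mul_mem_right b hj) ∈ q := by
      rw [← h1]; exact q.mul_mem_left _ h
    rcases hq.mem_or_mem h2 with h' | h'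
    · exact absurd h' hj0
    · exact h'

lemma invIdeal_isPrime {q : Ideal (amalg f J)} (hq : q.IsPrime)
    {j0 : B} (h0 : j0 ∈ J) (hj0 : el f J j0 h0 ∉ q) :
    (invIdeal f J q).IsPrime := by
  constructor
  · intro h
    have h1 : (1 : B) ∈ invIdeal f J q := h ▸ Submodule.mem_top
    have h2 := (mem_invIdeal_iff hq h0 hj0 1).mp h1
    rw [el_congr f J _ h0 (mul_one j0)] at h2
    exact hj0 h2
  · intro b b' h
    rw [mem_invIdeal_iff hq h0 hj0] at h
    have key : el f J (j0 * b) (J.mul_mem_right b h0) *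
        el f J (j0 * b') (J.mul_mem_right b' h0)
        = el f J j0 h0 * el f J (j0 * (b * b')) (J.mul_mem_right _ h0) := by
      rw [el_mul, el_mul]
      exact el_congr f J _ _ (by show (j0 * b) * (j0 * b') = j0 * (j0 * (b * b')); ring)
    have h2 : el f J (j0 * b) (J.mul_mem_right b h0) *
        el f J (j0 * b') (J.mul_mem_right b' h0) ∈ q := by
      rw [key]; exact q.mul_mem_left _ h
    rcases hq.mem_or_mem h2 with h' | h'
    · exact Or.inl ((mem_invIdeal_iff hq h0 hj0 b).mpr h')
    · exact Or.inr ((mem_invIdeal_iff hq h0 hj0 b').mpr h')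

lemma not_J_le_invIdeal {q : Ideal (amalg f J)} (hq : q.IsPrime)
    {j0 : B} (h0 : j0 ∈ J) (hj0 : el f J j0 h0 ∉ q) :
    ¬ J ≤ invIdeal f J q := by
  intro hle
  have h1 := (mem_invIdeal_iff hq h0 hj0 j0).mp (hle h0)
  have h2 : el f J (j0 * j0) (J.mul_mem_right j0 h0) = el f J j0 h0 * el f J j0 h0 := by
    rw [el_mul]; rfl
  rw [h2] at h1
  rcases hq.mem_or_mem h1 with h' | h' <;> exact hj0 h'

lemma comap_invIdeal {q : Ideal (amalg f J)} (hq : q.IsPrime)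
    {j0 : B} (h0 : j0 ∈ J) (hj0 : el f J j0 h0 ∉ q) :
    Ideal.comap (pB f J) (invIdeal f J q) = q := by
  ext x
  rw [Ideal.mem_comap, mem_invIdeal_iff hq h0 hj0]
  have h1 : el f J (j0 * pB f J x) (J.mul_mem_right _ h0) = el f J j0 h0 * x := by
    rw [el_mul]; rfl
  rw [h1]
  constructor
  · intro h
    rcases hq.mem_or_mem h with h' | h'
    · exact absurd h' hj0
    · exact h'
  · exact q.mul_mem_left _

lemma invIdeal_comap {P : Ideal B} (hP : P.IsPrime)
    {j0 : B} (h0 : j0 ∈ J) (hj0 : j0 ∉ P) :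
    invIdeal f J (Ideal.comap (pB f J) P) = P := by
  have hq : (Ideal.comap (pB f J) P).IsPrime := hP.comap _
  have hj0' : el f J j0 h0 ∉ Ideal.comap (pB f J) P := by
    rw [Ideal.mem_comap, pB_el]; exact hj0
  ext b
  rw [mem_invIdeal_iff hq h0 hj0', Ideal.mem_comap]
  have h1 : pB f J (el f J (j0 * b) (J.mul_mem_right b h0)) = j0 * b := rfl
  rw [h1]
  constructor
  · intro h
    rcases hP.mem_or_mem h with h' | h'
    · exact absurd h' hj0
    · exact h'
  · exact P.mul_mem_left _

lemma exists_el_not_mem {q : Ideal (amalg f J)} (hq : ¬ J0 f J ≤ q) :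
    ∃ j0 : B, ∃ h0 : j0 ∈ J, el f J j0 h0 ∉ q := by
  rw [SetLike.not_le_iff_exists] at hq
  obtain ⟨x, hx, hxq⟩ := hq
  obtain ⟨h1, h2⟩ : (x : A × B).1 = 0 ∧ (x : A × B).2 ∈ J := hx
  refine ⟨(x : A × B).2, h2, ?_⟩
  have h : el f J (x : A × B).2 h2 = x := Subtype.ext (by
    show ((0 : A), (x : A × B).2) = (x : A × B)
    exact Prod.ext h1.symm rfl)
  rwa [h]

end Aux

/-- The map `Q ↦ Q̄^f` is a homeomorphism of `Spec B \ V(J)` onto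
`Spec (A ⋈^f J) \ V(J₀)` (with the subspace Zariski topologies). -/
theorem stmt5 {A B : Type*} [CommRing A] [CommRing B] (f : A →+* B) (J : Ideal B) :
    ∃ h : {p : PrimeSpectrum B // ¬ J ≤ p.asIdeal} ≃ₜ
          {q : PrimeSpectrum (amalg f J) // ¬ J0 f J ≤ q.asIdeal},
      ∀ p : {p : PrimeSpectrum B // ¬ J ≤ p.asIdeal},
        ((h p : PrimeSpectrum (amalg f J)).asIdeal
          = idealQf f J (p : PrimeSpectrum B).asIdeal) := by
  classical
  -- forward map
  have fwd_prop : ∀ p : {p : PrimeSpectrum B // ¬ J ≤ p.asIdeal},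
      ¬ J0 f J ≤ (PrimeSpectrum.comap (pB f J) p.1).asIdeal := by
    rintro ⟨p, hp⟩ hle
    obtain ⟨j0, h0, hj0⟩ := SetLike.not_le_iff_exists.mp hp
    have h1 := hle (el_mem_J0 f J j0 h0)
    rw [PrimeSpectrum.comap_asIdeal, Ideal.mem_comap, pB_el] at h1
    exact hj0 h1
  let F : {p : PrimeSpectrum B // ¬ J ≤ p.asIdeal} →
      {q : PrimeSpectrum (amalg f J) // ¬ J0 f J ≤ q.asIdeal} :=
    fun p => ⟨PrimeSpectrum.comap (pB f J) p.1, fwd_prop p⟩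
  -- inverse map
  let G0 : {q : PrimeSpectrum (amalg f J) // ¬ J0 f J ≤ q.asIdeal} → PrimeSpectrum B :=
    fun q => ⟨invIdeal f J q.1.asIdeal, by
      obtain ⟨j0, h0, hj0⟩ := exists_el_not_mem q.2
      exact invIdeal_isPrime q.1.isPrime h0 hj0⟩
  have inv_prop : ∀ q : {q : PrimeSpectrum (amalg f J) // ¬ J0 f J ≤ q.asIdeal},
      ¬ J ≤ (G0 q).asIdeal := by
    intro q
    obtain ⟨j0, h0, hj0⟩ := exists_el_not_mem q.2
    exact not_J_le_invIdeal q.1.isPrime h0 hj0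
  let G : {q : PrimeSpectrum (amalg f J) // ¬ J0 f J ≤ q.asIdeal} →
      {p : PrimeSpectrum B // ¬ J ≤ p.asIdeal} := fun q => ⟨G0 q, inv_prop q⟩
  have left_inv : Function.LeftInverse G F := by
    rintro ⟨p, hp⟩
    obtain ⟨j0, h0, hj0⟩ := SetLike.not_le_iff_exists.mp hp
    apply Subtype.ext
    apply PrimeSpectrum.ext
    show invIdeal f J (PrimeSpectrum.comap (pB f J) p).asIdeal = p.asIdeal
    rw [PrimeSpectrum.comap_asIdeal]
    exact invIdeal_comap p.isPrime h0 hj0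
  have right_inv : Function.RightInverse G F := by
    rintro ⟨q, hq⟩
    obtain ⟨j0, h0, hj0⟩ := exists_el_not_mem hq
    apply Subtype.ext
    apply PrimeSpectrum.ext
    show (PrimeSpectrum.comap (pB f J) (G0 ⟨q, hq⟩)).asIdeal = q.asIdeal
    rw [PrimeSpectrum.comap_asIdeal]
    exact comap_invIdeal q.isPrime h0 hj0
  -- continuity of the forward map
  have contF : Continuous F := by
    apply Continuous.subtype_mk
    exact (PrimeSpectrum.continuous_comap (pB f J)).comp continuous_subtype_val
  -- continuity of the inverse map
  have contG0 : Continuous G0 := by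
    rw [(PrimeSpectrum.isTopologicalBasis_basic_opens (R := B)).continuous_iff]
    rintro _ ⟨b, rfl⟩
    have heq : G0 ⁻¹' (PrimeSpectrum.basicOpen b : Set (PrimeSpectrum B)) =
        ⋃ j : J, Subtype.val ⁻¹'
          (PrimeSpectrum.basicOpen (el f J ((j : B) * b) (J.mul_mem_right b j.2)) :
            Set (PrimeSpectrum (amalg f J))) := by
      ext q
      simp only [Set.mem_preimage, Set.mem_iUnion, SetLike.mem_coe,
        PrimeSpectrum.mem_basicOpen]
      show b ∉ invIdeal f J q.1.asIdeal ↔ _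
      rw [mem_invIdeal]
      push_neg
      constructor
      · rintro ⟨j, hj, h⟩; exact ⟨⟨j, hj⟩, h⟩
      · rintro ⟨⟨j, hj⟩, h⟩; exact ⟨j, hj, h⟩
    rw [heq]
    exact isOpen_iUnion fun j =>
      (PrimeSpectrum.isOpen_basicOpen).preimage continuous_subtype_val
  have contG : Continuous G := Continuous.subtype_mk contG0 _
  refine ⟨⟨⟨F, G, left_inv, right_inv⟩, contF, contG⟩, ?_⟩
  intro p
  show (PrimeSpectrum.comap (pB f J) p.1).asIdeal = idealQf f J p.1.asIdeal
  rw [PrimeSpectrum.comap_asIdeal, idealQf_eq]
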